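/- Let λ ∈ ℝ with λ ≠ 0 and let C = [[a₁, a₀], [a₀, a₂]] be a symmetric real 2×2 matrix; set β₀ = (a₁+a₂)/4. For ε > 0 let J^ε := ∫₀^∞ exp(-λrA)·C·exp(λrA)·e^{-2εr} dr. Then ε·J^ε converges to β₀·I as ε → 0⁺. -/

import Mathlib

open Matrix MeasureTheory Set
attribute [local instance] Matrix.linftyOpNormedRing Matrix.linftyOpNormedAlgebra

/-- The 2×2 matrix `A = [[0, 1], [-1, 0]]`. -/
noncomputable def matA : Matrix (Fin 2) (Fin 2) ℝ := !![0, 1; -1, 0]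

lemma exp_smul_matA (t : ℝ) :
    NormedSpace.exp (t • matA) = !![Real.cos t, Real.sin t; -Real.sin t, Real.cos t] := by
  set φ := Algebra.leftMulMatrix Complex.basisOneI with hφ
  have hcont : Continuous φ := φ.toLinearMap.continuous_of_finiteDimensional
  have h1 : t • matA = φ (((-t : ℝ) : ℂ) * Complex.I) := by
    rw [hφ, Algebra.leftMulMatrix_complex]
    ext i j
    fin_cases i <;> fin_cases j <;> simp [matA]
  rw [h1]
  erw [← NormedSpace.map_exp φ hcont]
  have h2 : NormedSpace.exp (((-t : ℝ) : ℂ) * Complex.I)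
      = Complex.exp (((-t : ℝ) : ℂ) * Complex.I) := by
    rw [← Complex.exp_eq_exp_ℂ]
  rw [h2, Complex.exp_mul_I, hφ, Algebra.leftMulMatrix_complex]
  ext i j
  fin_cases i <;> fin_cases j <;>
    simp [Complex.cos_ofReal_re, Complex.sin_ofReal_re, Complex.cos_ofReal_im,
      Complex.sin_ofReal_im, Real.cos_neg, Real.sin_neg]

lemma hfe_cos (a b : ℝ) :
    (fun r : ℝ => (Complex.exp ((-(a:ℂ)+b*Complex.I)*r)).re)
      = fun r => Real.cos (b*r) * Real.exp (-(a*r)) := by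
  ext r
  rw [Complex.exp_re]
  have h1 : ((-(a:ℂ)+b*Complex.I)*r).re = -(a*r) := by simp
  have h2 : ((-(a:ℂ)+b*Complex.I)*r).im = b*r := by simp
  rw [h1, h2, mul_comm]

lemma hfe_sin (a b : ℝ) :
    (fun r : ℝ => (Complex.exp ((-(a:ℂ)+b*Complex.I)*r)).im)
      = fun r => Real.sin (b*r) * Real.exp (-(a*r)) := by
  ext r
  rw [Complex.exp_im]
  have h1 : ((-(a:ℂ)+b*Complex.I)*r).re = -(a*r) := by simp
  have h2 : ((-(a:ℂ)+b*Complex.I)*r).im = b*r := by simp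
  rw [h1, h2, mul_comm]

lemma integrableOn_cexp {a : ℝ} (ha : 0 < a) (b : ℝ) :
    IntegrableOn (fun r : ℝ => Complex.exp ((-(a:ℂ) + b*Complex.I) * r)) (Ioi 0) := by
  refine (exp_neg_integrableOn_Ioi 0 ha).mono' ?_ ?_
  · exact (Complex.continuous_exp.comp (by fun_prop)).aestronglyMeasurable
  · filter_upwards with r
    have h : ((-(a:ℂ) + b*Complex.I) * r).re = -(a*r) := by simp
    rw [Complex.norm_exp, h, neg_mul]

lemma integral_cexp {a : ℝ} (ha : 0 < a) (b : ℝ) :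
    ∫ r in Ioi (0:ℝ), Complex.exp ((-(a:ℂ) + b*Complex.I) * r) = 1 / ((a:ℂ) - b*Complex.I) := by
  set c : ℂ := -(a:ℂ) + b*Complex.I with hcdef
  have hc : c ≠ 0 := by
    intro h
    have := congrArg Complex.re h
    simp [hcdef] at this; linarith
  have D : ∀ x : ℝ, HasDerivAt (fun y : ℝ => Complex.exp (c*y)/c) (Complex.exp (c*x)) x := by
    intro x
    conv in Complex.exp (c*x) => rw [← mul_div_cancel_right₀ (Complex.exp (c*(x:ℝ))) hc]
    apply ((Complex.hasDerivAt_exp _).comp x _).div_const c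
    simpa only [mul_one, id] using ((hasDerivAt_id ((x:ℝ):ℂ)).const_mul c).comp_ofReal
  have htend : Filter.Tendsto (fun y : ℝ => Complex.exp (c*y)/c) Filter.atTop (nhds 0) := by
    rw [tendsto_zero_iff_norm_tendsto_zero]
    have heq : (fun y:ℝ => ‖Complex.exp (c*y)/c‖) = fun y => Real.exp (-(a*y)) / ‖c‖ := by
      ext y
      rw [norm_div, Complex.norm_exp]
      congr 2
      simp [hcdef]
    rw [heq]
    have hmul : Filter.Tendsto (fun y : ℝ => a * y) Filter.atTop Filter.atTop :=
      Filter.tendsto_id.const_mul_atTop ha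
    have h2 : Filter.Tendsto (fun y : ℝ => Real.exp (-(a*y))) Filter.atTop (nhds 0) :=
      Real.tendsto_exp_neg_atTop_nhds_zero.comp hmul
    simpa using h2.div_const ‖c‖
  have key := integral_Ioi_of_hasDerivAt_of_tendsto (D 0).continuousAt.continuousWithinAt
    (fun x _ => D x) (integrableOn_cexp ha b) htend
  rw [key, Complex.ofReal_zero, mul_zero, Complex.exp_zero, zero_sub, hcdef,
    show -(a:ℂ)+b*Complex.I = -((a:ℂ) - b*Complex.I) by ring, div_neg, neg_neg]

lemma integrableOn_cos_exp {a : ℝ} (ha : 0 < a) (b : ℝ) :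
    IntegrableOn (fun r : ℝ => Real.cos (b*r) * Real.exp (-(a*r))) (Ioi 0) := by
  have h := (integrableOn_cexp ha b).re
  rw [show (fun x : ℝ => RCLike.re (Complex.exp ((-(a:ℂ)+b*Complex.I)*x))) = (fun r : ℝ => (Complex.exp ((-(a:ℂ)+b*Complex.I)*r)).re) from rfl, hfe_cos] at h
  exact h

lemma integrableOn_sin_exp {a : ℝ} (ha : 0 < a) (b : ℝ) :
    IntegrableOn (fun r : ℝ => Real.sin (b*r) * Real.exp (-(a*r))) (Ioi 0) := by
  have h := (integrableOn_cexp ha b).im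
  rw [show (fun x : ℝ => RCLike.im (Complex.exp ((-(a:ℂ)+b*Complex.I)*x))) = (fun r : ℝ => (Complex.exp ((-(a:ℂ)+b*Complex.I)*r)).im) from rfl, hfe_sin] at h
  exact h

lemma integral_cos_exp {a : ℝ} (ha : 0 < a) (b : ℝ) :
    ∫ r in Ioi (0:ℝ), Real.cos (b*r) * Real.exp (-(a*r)) = a/(a^2+b^2) := by
  have h := integral_re (integrableOn_cexp ha b)
  simp only [RCLike.re_to_complex] at h
  rw [show (fun x : ℝ => (Complex.exp ((-(a:ℂ)+b*Complex.I)*x)).re) = (fun r : ℝ => (Complex.exp ((-(a:ℂ)+b*Complex.I)*r)).re) from rfl, hfe_cos, integral_cexp ha b] at h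
  rw [h, one_div, Complex.inv_re]
  have h1 : ((a:ℂ) - b*Complex.I).re = a := by simp
  have h2 : Complex.normSq ((a:ℂ) - b*Complex.I) = a^2 + b^2 := by
    simp [Complex.normSq_apply]; ring
  rw [h1, h2]

lemma integral_sin_exp {a : ℝ} (ha : 0 < a) (b : ℝ) :
    ∫ r in Ioi (0:ℝ), Real.sin (b*r) * Real.exp (-(a*r)) = b/(a^2+b^2) := by
  have h := integral_im (integrableOn_cexp ha b)
  simp only [RCLike.im_to_complex] at h
  rw [show (fun x : ℝ => (Complex.exp ((-(a:ℂ)+b*Complex.I)*x)).im) = (fun r : ℝ => (Complex.exp ((-(a:ℂ)+b*Complex.I)*r)).im) from rfl, hfe_sin, integral_cexp ha b] at h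
  rw [h, one_div, Complex.inv_im]
  have h1 : ((a:ℂ) - b*Complex.I).im = -b := by simp
  have h2 : Complex.normSq ((a:ℂ) - b*Complex.I) = a^2 + b^2 := by
    simp [Complex.normSq_apply]; ring
  rw [h1, h2, neg_neg]

lemma integrableOn_exp' {a : ℝ} (ha : 0 < a) :
    IntegrableOn (fun r : ℝ => Real.exp (-(a*r))) (Ioi 0) := by
  have := integrableOn_cos_exp ha 0
  simpa using this

lemma integral_exp' {a : ℝ} (ha : 0 < a) :
    ∫ r in Ioi (0:ℝ), Real.exp (-(a*r)) = 1/a := by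
  have h := integral_cos_exp ha 0
  simp at h
  rw [h]
  field_simp

/-- The matrix `J^ε := ∫₀^∞ exp(-λrA)·C·exp(λrA)·e^{-2εr} dr` (entrywise integral). -/
noncomputable def Jeps (lam : ℝ) (C : Matrix (Fin 2) (Fin 2) ℝ) (ε : ℝ) :
    Matrix (Fin 2) (Fin 2) ℝ :=
  Matrix.of (fun i j =>
    ∫ r in Set.Ioi (0 : ℝ),
      (NormedSpace.exp (-(lam * r) • matA) * C *
        NormedSpace.exp ((lam * r) • matA)) i j * Real.exp (-(2 * ε * r)))

lemma conj_entry (a₀ a₁ a₂ t : ℝ) (i j : Fin 2) :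
    (!![Real.cos (-t), Real.sin (-t); -Real.sin (-t), Real.cos (-t)] * !![a₁,a₀;a₀,a₂] *
      !![Real.cos t, Real.sin t; -Real.sin t, Real.cos t]) i j
      = (!![(a₁+a₂)/2, 0; 0, (a₁+a₂)/2]) i j
        + (!![(a₁-a₂)/2, a₀; a₀, -((a₁-a₂)/2)]) i j * Real.cos (2*t)
        + (!![-a₀, (a₁-a₂)/2; (a₁-a₂)/2, a₀]) i j * Real.sin (2*t) := by
  have hpz := Real.sin_sq_add_cos_sq t
  fin_cases i <;> fin_cases j
  · simp [Matrix.mul_apply, Fin.sum_univ_two, Real.cos_neg, Real.sin_neg,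
      Real.cos_two_mul, Real.sin_two_mul]
    linear_combination a₂ * hpz
  · simp [Matrix.mul_apply, Fin.sum_univ_two, Real.cos_neg, Real.sin_neg,
      Real.cos_two_mul, Real.sin_two_mul]
    linear_combination (-a₀) * hpz
  · simp [Matrix.mul_apply, Fin.sum_univ_two, Real.cos_neg, Real.sin_neg,
      Real.cos_two_mul, Real.sin_two_mul]
    linear_combination (-a₀) * hpz
  · simp [Matrix.mul_apply, Fin.sum_univ_two, Real.cos_neg, Real.sin_neg,
      Real.cos_two_mul, Real.sin_two_mul]
    linear_combination a₁ * hpz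

/-- Let `λ ≠ 0` and `C = [[a₁, a₀], [a₀, a₂]]` symmetric with `β₀ = (a₁+a₂)/4`.
Then `ε·J^ε → β₀·I` as `ε → 0⁺`. -/
theorem eps_J_eps_tendsto (lam : ℝ) (hlam : lam ≠ 0) (a₀ a₁ a₂ : ℝ)
    (C : Matrix (Fin 2) (Fin 2) ℝ) (hC : C = !![a₁, a₀; a₀, a₂])
    (β₀ : ℝ) (hβ₀ : β₀ = (a₁ + a₂) / 4) :
    Filter.Tendsto (fun ε : ℝ => ε • Jeps lam C ε)
      (nhdsWithin 0 (Set.Ioi 0))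
      (nhds (β₀ • (1 : Matrix (Fin 2) (Fin 2) ℝ))) := by
  have hd : ∀ x : ℝ, (2*x)^2+(2*lam)^2 ≠ 0 := by
    intro x
    have h2 : (0:ℝ) < (2*lam)^2 :=
      lt_of_le_of_ne (sq_nonneg _) (Ne.symm (pow_ne_zero 2 (mul_ne_zero two_ne_zero hlam)))
    nlinarith [sq_nonneg (2*x)]
  set K : Matrix (Fin 2) (Fin 2) ℝ := !![(a₁+a₂)/2, 0; 0, (a₁+a₂)/2] with hK
  set L : Matrix (Fin 2) (Fin 2) ℝ := !![(a₁-a₂)/2, a₀; a₀, -((a₁-a₂)/2)] with hL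
  set P : Matrix (Fin 2) (Fin 2) ℝ := !![-a₀, (a₁-a₂)/2; (a₁-a₂)/2, a₀] with hP
  set F : ℝ → Matrix (Fin 2) (Fin 2) ℝ := fun ε => Matrix.of (fun i j =>
      K i j / 2 + L i j * (2*ε/((2*ε)^2+(2*lam)^2) * ε)
        + P i j * (2*lam/((2*ε)^2+(2*lam)^2) * ε)) with hF
  have key : ∀ ε : ℝ, 0 < ε → ε • Jeps lam C ε = F ε := by
    intro ε hε
    have ha : 0 < 2*ε := by linarith
    ext i j
    have hint : (fun r : ℝ =>
        (NormedSpace.exp (-(lam * r) • matA) * C *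
          NormedSpace.exp ((lam * r) • matA)) i j * Real.exp (-(2 * ε * r)))
        = fun r : ℝ =>
          K i j * Real.exp (-(2*ε*r))
          + L i j * (Real.cos (2*lam*r) * Real.exp (-(2*ε*r)))
          + P i j * (Real.sin (2*lam*r) * Real.exp (-(2*ε*r))) := by
      ext r
      rw [hC, show (-(lam * r)) • matA = (-(lam*r)) • matA from rfl, exp_smul_matA,
        exp_smul_matA, conj_entry a₀ a₁ a₂ (lam*r) i j]
      rw [show 2*(lam*r) = 2*lam*r by ring]
      ring
    have hI1 : IntegrableOn (fun r : ℝ => K i j * Real.exp (-(2*ε*r))) (Ioi 0) :=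
      (integrableOn_exp' ha).const_mul _
    have hI2 : IntegrableOn
        (fun r : ℝ => L i j * (Real.cos (2*lam*r) * Real.exp (-(2*ε*r)))) (Ioi 0) :=
      (integrableOn_cos_exp ha (2*lam)).const_mul _
    have hI3 : IntegrableOn
        (fun r : ℝ => P i j * (Real.sin (2*lam*r) * Real.exp (-(2*ε*r)))) (Ioi 0) :=
      (integrableOn_sin_exp ha (2*lam)).const_mul _
    have hI12 : IntegrableOn (fun r : ℝ =>
        K i j * Real.exp (-(2*ε*r))
        + L i j * (Real.cos (2*lam*r) * Real.exp (-(2*ε*r)))) (Ioi 0) := hI1.add hI2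
    have hsplit : ∫ r in Ioi (0:ℝ),
        (K i j * Real.exp (-(2*ε*r))
          + L i j * (Real.cos (2*lam*r) * Real.exp (-(2*ε*r)))
          + P i j * (Real.sin (2*lam*r) * Real.exp (-(2*ε*r))))
        = K i j * (1/(2*ε)) + L i j * ((2*ε)/((2*ε)^2+(2*lam)^2))
          + P i j * ((2*lam)/((2*ε)^2+(2*lam)^2)) := by
      rw [integral_add hI12 hI3, integral_add hI1 hI2,
        integral_const_mul, integral_const_mul, integral_const_mul,
        integral_exp' ha, integral_cos_exp ha (2*lam), integral_sin_exp ha (2*lam)]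
    have hJ : Jeps lam C ε i j
        = K i j * (1/(2*ε)) + L i j * ((2*ε)/((2*ε)^2+(2*lam)^2))
          + P i j * ((2*lam)/((2*ε)^2+(2*lam)^2)) := by
      show (∫ r in Ioi (0:ℝ),
        (NormedSpace.exp (-(lam * r) • matA) * C *
          NormedSpace.exp ((lam * r) • matA)) i j * Real.exp (-(2 * ε * r))) = _
      rw [hint, hsplit]
    show ε * Jeps lam C ε i j = K i j / 2 + L i j * (2*ε/((2*ε)^2+(2*lam)^2) * ε)
        + P i j * (2*lam/((2*ε)^2+(2*lam)^2) * ε)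
    rw [hJ]
    field_simp
  have hFcont : Continuous F := by
    apply continuous_matrix
    intro i j
    rw [hF]
    simp only [Matrix.of_apply]
    have c1 : Continuous fun x : ℝ => 2*x/((2*x)^2+(2*lam)^2) * x :=
      (Continuous.div (by fun_prop) (by fun_prop) hd).mul continuous_id
    have c2 : Continuous fun x : ℝ => 2*lam/((2*x)^2+(2*lam)^2) * x :=
      (Continuous.div (by fun_prop) (by fun_prop) hd).mul continuous_id
    exact (continuous_const.add ((continuous_const.mul c1))).add (continuous_const.mul c2)
  have hF0 : F 0 = β₀ • (1 : Matrix (Fin 2) (Fin 2) ℝ) := by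
    rw [hF]
    ext i j
    fin_cases i <;> fin_cases j <;>
      simp [hK, hL, hP, hβ₀, Matrix.one_apply] <;> ring
  have htend : Filter.Tendsto F (nhdsWithin 0 (Set.Ioi 0)) (nhds (β₀ • 1)) := by
    rw [← hF0]
    exact (hFcont.tendsto 0).mono_left nhdsWithin_le_nhds
  refine htend.congr' ?_
  exact Filter.eventuallyEq_of_mem self_mem_nhdsWithin fun ε hε => (key ε hε).symm
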